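/- Let λ = (λ_1 ≥ ⋯ ≥ λ_j > 0) be a partition of n with j parts, let G = S_{n-q} × S_q ≤ S_n with n-q ≥ q, and suppose j ≥ q+1. If some part λ_a ≥ 3 with a ≥ q+1, then for every s ∈ S_n there exists an index i and a cycle c of length λ_i ≥ 3 in the standard cycle decomposition c_λ such that s·c·s⁻¹ ∈ G. -/

import Mathlib

open scoped Pointwise

/-- The interval `{L, L+1, …, L+len-1}` inside `Fin n`, identified with `Fin len`. -/
def intervalEquiv (n L len : ℕ) (h : L + len ≤ n) :
    Fin len ≃ {x : Fin n // L ≤ (x : ℕ) ∧ (x : ℕ) < L + len} where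
  toFun i := ⟨⟨L + i.1, by have := i.2; omega⟩, by
    constructor <;> simp⟩
  invFun x := ⟨x.1.1 - L, by have h1 := x.2.1; have h2 := x.2.2; omega⟩
  left_inv i := by
    apply Fin.ext
    simp
  right_inv x := by
    apply Subtype.ext
    apply Fin.ext
    have h1 := x.2.1
    simp
    omega

/-- The standard cycle `(L+1, L+2, …, L+len)` (in 1-based notation) of length `len`
on a consecutive interval, as a permutation of `Fin n`. -/
def intervalCycle (n L len : ℕ) : Equiv.Perm (Fin n) :=
  if h : L + len ≤ n then (finRotate len).extendDomain (intervalEquiv n L len h) else 1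

/-- Lemma 2.3(1): let `λ = (λ₁ ≥ ⋯ ≥ λ_j > 0)` be a partition of `n` with `j ≥ q+1`
parts, `G = S_{n-q} × S_q ≤ S_n` with `n - q ≥ q`, and suppose some part `λ_a ≥ 3`
with (0-based) index `a ≥ q`. Then for every `s ∈ S_n` there is an index `i` whose
part satisfies `λ_i ≥ 3` such that the conjugate by `s` of the `i`-th cycle of the
standard element `c_λ` lies in `G`. -/
theorem stmt_13 (n q : ℕ) (parts : List ℕ) (hsum : parts.sum = n)
    (hpos : ∀ x ∈ parts, 0 < x) (hsorted : parts.Pairwise (· ≥ ·))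
    (hq : q ≤ n - q) (hlen : q + 1 ≤ parts.length)
    (a : Fin parts.length) (haq : q ≤ (a : ℕ)) (ha3 : 3 ≤ parts.get a)
    (s : Equiv.Perm (Fin n)) :
    ∃ i : Fin parts.length, 3 ≤ parts.get i ∧
      s * intervalCycle n ((parts.take (i : ℕ)).sum) (parts.get i) * s⁻¹ ∈
        MulAction.stabilizer (Equiv.Perm (Fin n))
          ({x : Fin n | (x : ℕ) < n - q} : Set (Fin n)) := by
  classical
  have hn : q ≤ n := by omega
  have hidx : ∀ k : Fin (q+1), (k : ℕ) < parts.length := fun k => lt_of_lt_of_le k.2 hlen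
  have hmono : ∀ {u u' : ℕ}, u ≤ u' → (parts.take u).sum ≤ (parts.take u').sum := by
    intro u u' h
    conv_rhs => rw [← List.take_append_drop u (parts.take u')]
    rw [List.sum_append, List.take_take, min_eq_left h]
    exact Nat.le_add_right _ _
  have hLbound : ∀ (u : ℕ) (hu : u < parts.length),
      (parts.take u).sum + parts.get ⟨u, hu⟩ ≤ n := by
    intro u hu
    have h1 := List.sum_take_succ parts u hu
    have h2 : (parts.take (u+1)).sum ≤ (parts.take parts.length).sum := hmono (by omega)
    rw [List.take_length] at h2
    simp only [List.get_eq_getElem]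
    omega
  have hsep : ∀ (u u' : ℕ) (hu : u < parts.length), u < u' →
      (parts.take u).sum + parts.get ⟨u, hu⟩ ≤ (parts.take u').sum := by
    intro u u' hu huu'
    have h1 := List.sum_take_succ parts u hu
    have h2 : (parts.take (u+1)).sum ≤ (parts.take u').sum := hmono (by omega)
    simp only [List.get_eq_getElem]
    omega
  set B : Finset (Fin n) := Finset.univ.filter (fun x => n - q ≤ ((s x : Fin n) : ℕ)) with hB
  have hBcard : B.card ≤ q := by
    have h1 : B.card ≤ (Finset.Ico (n-q) n).card := by
      apply Finset.card_le_card_of_injOn (fun x => ((s x : Fin n) : ℕ))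
      · intro x hx
        rw [Finset.mem_coe, Finset.mem_Ico]
        exact ⟨(Finset.mem_filter.mp hx).2, (s x).2⟩
      · intro x _ x' _ hxx'
        exact s.injective (Fin.val_injective hxx')
    rw [Nat.card_Ico] at h1
    omega
  obtain ⟨k, hk⟩ : ∃ k : Fin (q+1), ∀ x : Fin n,
      (parts.take (k : ℕ)).sum ≤ (x : ℕ) →
      (x : ℕ) < (parts.take (k : ℕ)).sum + parts.get ⟨k, hidx k⟩ →
      ((s x : Fin n) : ℕ) < n - q := by
    by_contra hcon
    push_neg at hcon
    choose g hg1 hg2 hg3 using hcon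
    have hginj : Function.Injective g := by
      intro k k' hgk
      have h1 := hg1 k; have h2 := hg2 k
      have h1' := hg1 k'; have h2' := hg2 k'
      rw [hgk] at h1 h2
      by_contra hne
      have hne' : (k : ℕ) ≠ (k' : ℕ) := fun h => hne (Fin.ext h)
      rcases Nat.lt_or_ge (k : ℕ) (k' : ℕ) with h | h
      · have := hsep (k : ℕ) (k' : ℕ) (hidx k) h
        omega
      · have h' : (k' : ℕ) < (k : ℕ) := by omega
        have := hsep (k' : ℕ) (k : ℕ) (hidx k') h'
        omega
    have hcard : q + 1 ≤ B.card := by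
      have h1 := Finset.card_le_card_of_injOn (s := Finset.univ) (t := B) g
        (fun k _ => Finset.mem_filter.mpr ⟨Finset.mem_univ _, hg3 k⟩)
        (fun k _ k' _ h => hginj h)
      simpa using h1
    omega
  refine ⟨⟨k, hidx k⟩, ?_, ?_⟩
  · have hka : (⟨k, hidx k⟩ : Fin parts.length) ≤ a := by
      rw [Fin.le_def]
      simp only []
      omega
    have h1 := hsorted.rel_get_of_le hka
    omega
  · set L : ℕ := (parts.take ((⟨k, hidx k⟩ : Fin parts.length) : ℕ)).sum with hL
    set m : ℕ := parts.get (⟨k, hidx k⟩ : Fin parts.length) with hm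
    have hk' : ∀ x : Fin n, L ≤ (x : ℕ) → (x : ℕ) < L + m → ((s x : Fin n) : ℕ) < n - q := hk
    have hLm : L + m ≤ n := hLbound (k : ℕ) (hidx k)
    have hc : intervalCycle n L m = (finRotate m).extendDomain (intervalEquiv n L m hLm) := by
      rw [intervalCycle, dif_pos hLm]
    have hiff : ∀ x : Fin n,
        (((s * intervalCycle n L m * s⁻¹) x : Fin n) : ℕ) < n - q ↔ (x : ℕ) < n - q := by
      intro x
      have happ : (s * intervalCycle n L m * s⁻¹) x = s (intervalCycle n L m (s⁻¹ x)) := rfl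
      by_cases hy : L ≤ ((s⁻¹ x : Fin n) : ℕ) ∧ ((s⁻¹ x : Fin n) : ℕ) < L + m
      · have hcy : L ≤ ((intervalCycle n L m (s⁻¹ x) : Fin n) : ℕ) ∧
            ((intervalCycle n L m (s⁻¹ x) : Fin n) : ℕ) < L + m := by
          have heq := Equiv.Perm.extendDomain_apply_subtype (finRotate m)
            (intervalEquiv n L m hLm) (b := s⁻¹ x) hy
          rw [hc, heq]
          exact ((intervalEquiv n L m hLm) _).2
        have h1 : ((s (intervalCycle n L m (s⁻¹ x)) : Fin n) : ℕ) < n - q :=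
          hk' _ hcy.1 hcy.2
        have h2 : ((x : Fin n) : ℕ) < n - q := by
          have h3 := hk' _ hy.1 hy.2
          rwa [Equiv.Perm.inv_def, Equiv.apply_symm_apply] at h3
        rw [happ]
        exact iff_of_true h1 h2
      · have hfix : intervalCycle n L m (s⁻¹ x) = s⁻¹ x := by
          rw [hc]
          exact Equiv.Perm.extendDomain_apply_not_subtype _ _ hy
        rw [happ, hfix, Equiv.Perm.inv_def, Equiv.apply_symm_apply]
    rw [MulAction.mem_stabilizer_iff]
    ext x
    rw [Set.mem_smul_set_iff_inv_smul_mem]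
    simp only [Equiv.Perm.smul_def, Set.mem_setOf_eq]
    have h1 := hiff ((s * intervalCycle n L m * s⁻¹)⁻¹ x)
    rw [Equiv.Perm.inv_def, Equiv.Perm.inv_def, Equiv.apply_symm_apply] at h1
    exact h1.symm
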